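/- Let I_a ⊆ Q_n, let F_{j,k} ⊆ Q_n be a hyperface, and g ∈ Aut(Q_n) with a' = |g(I_a) ∩ F_{j,k}|. Then the induced subgraph on I_a ∩ g^{-1}(F_{j,k}) is isomorphic to the initial segment I_{a'}: concretely, there exists h ∈ Aut(Q_n) such that h(F_{0,0}) = g^{-1}(F_{j,k}) and h(I_{a'}) = I_a ∩ g^{-1}(F_{j,k}). -/

import Mathlib

/-- The hypercube graph on `{0,1}^n`: two strings adjacent iff they differ in one coordinate. -/
def hypercube (n : ℕ) : SimpleGraph (Fin n → Bool) where
  Adj x y := (Finset.univ.filter (fun i => x i ≠ y i)).card = 1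
  symm := by constructor; intro x y h; simpa [ne_comm] using h
  loopless := by constructor; intro x h; simp at h

/-- The integer represented by a string, position 0 most significant. -/
def bval {n : ℕ} (x : Fin n → Bool) : ℕ :=
  ∑ i : Fin n, if x i then 2 ^ (n - 1 - i.val) else 0

/-- The initial segment of length `a` in the binary order on `{0,1}^n`. -/
def initSeg (n a : ℕ) : Finset (Fin n → Bool) :=
  Finset.univ.filter (fun x => bval x < a)

/-- `m_j(S)`: number of elements of `S` with a `1` in coordinate `j`. -/
def mCount {n : ℕ} (S : Finset (Fin n → Bool)) (j : Fin n) : ℕ :=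
  (S.filter (fun x => x j = true)).card

/-- The hyperface `F_{j,k}` of strings whose `j`-th coordinate equals `k`. -/
def face (n : ℕ) (j : Fin n) (k : Bool) : Finset (Fin n → Bool) :=
  Finset.univ.filter (fun x => x j = k)

/-! ### Hamming distance and automorphisms -/

section Ham

variable {n : ℕ}

def ham (x y : Fin n → Bool) : ℕ := (Finset.univ.filter (fun i => x i ≠ y i)).card

lemma hyper_adj {x y : Fin n → Bool} : (hypercube n).Adj x y ↔ ham x y = 1 := Iff.rfl

lemma ham_self (x : Fin n → Bool) : ham x x = 0 := by simp [ham]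

lemma ham_eq_zero {x y : Fin n → Bool} (h : ham x y = 0) : x = y := by
  funext i
  by_contra hi
  have hmem : i ∈ Finset.univ.filter (fun i => x i ≠ y i) := by simp [hi]
  rw [ham, Finset.card_eq_zero] at h
  rw [h] at hmem
  exact absurd hmem (Finset.notMem_empty i)

lemma ham_triangle (x y z : Fin n → Bool) : ham x z ≤ ham x y + ham y z := by
  refine le_trans (Finset.card_le_card ?_) (Finset.card_union_le _ _)
  intro i hi
  simp only [Finset.mem_filter, Finset.mem_union, Finset.mem_univ, true_and] at hi ⊢
  by_contra hc
  push_neg at hc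
  rw [hc.1, hc.2] at hi
  exact hi rfl

lemma ham_le_length {x y : Fin n → Bool} (w : (hypercube n).Walk x y) :
    ham x y ≤ w.length := by
  induction w with
  | nil => simp [ham_self]
  | @cons u v z h p ih =>
    rw [SimpleGraph.Walk.length_cons]
    calc ham u z ≤ ham u v + ham v z := ham_triangle _ _ _
    _ ≤ 1 + p.length := add_le_add (le_of_eq (hyper_adj.mp h)) ih
    _ = p.length + 1 := by omega

lemma exists_walk : ∀ (c : ℕ) (x y : Fin n → Bool), ham x y = c →
    ∃ w : (hypercube n).Walk x y, w.length = c := by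
  intro c
  induction c with
  | zero =>
    intro x y h
    obtain rfl := ham_eq_zero h
    exact ⟨SimpleGraph.Walk.nil, rfl⟩
  | succ c ih =>
    intro x y h
    have h' : (Finset.univ.filter (fun i => x i ≠ y i)).card = c + 1 := h
    have hne : (Finset.univ.filter (fun i => x i ≠ y i)).Nonempty :=
      Finset.card_pos.mp (by omega)
    obtain ⟨i, hi⟩ := hne
    have hixy : x i ≠ y i := (Finset.mem_filter.mp hi).2
    set x' := Function.update x i (y i) with hx'
    have hset : (Finset.univ.filter (fun t => x' t ≠ y t))
        = (Finset.univ.filter (fun t => x t ≠ y t)).erase i := by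
      ext t
      simp only [Finset.mem_filter, Finset.mem_erase, Finset.mem_univ, true_and, and_comm]
      by_cases ht : t = i
      · subst ht; simp [hx', Function.update_self]
      · simp [hx', Function.update_of_ne ht, ht]
    have hadj : (hypercube n).Adj x x' := by
      rw [hyper_adj, ham]
      have hone : (Finset.univ.filter (fun t => x t ≠ x' t)) = {i} := by
        ext t
        simp only [Finset.mem_filter, Finset.mem_univ, true_and, Finset.mem_singleton]
        by_cases ht : t = i
        · subst ht; simp [hx', Function.update_self, hixy]
        · simp [hx', Function.update_of_ne ht, ht]
      rw [hone, Finset.card_singleton]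
    have hham' : ham x' y = c := by
      rw [ham, hset, Finset.card_erase_of_mem hi, h']
      omega
    obtain ⟨w, hw⟩ := ih x' y hham'
    exact ⟨SimpleGraph.Walk.cons hadj w, by simp [hw]⟩

lemma ham_map (g : hypercube n ≃g hypercube n) (x y : Fin n → Bool) :
    ham (g x) (g y) ≤ ham x y := by
  obtain ⟨w, hw⟩ := exists_walk (ham x y) x y rfl
  have := ham_le_length (w.map g.toHom)
  rwa [SimpleGraph.Walk.length_map, hw] at this

lemma iso_ham (g : hypercube n ≃g hypercube n) (x y : Fin n → Bool) :
    ham (g x) (g y) = ham x y := by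
  refine le_antisymm (ham_map g x y) ?_
  have := ham_map g.symm (g x) (g y)
  simpa using this

lemma ham_lt_iff {u v : Fin n → Bool} {j : Fin n}
    (huv : Finset.univ.filter (fun i => u i ≠ v i) = {j}) (x : Fin n → Bool) :
    ham x u < ham x v ↔ x j = u j := by
  have hj : u j ≠ v j := by
    have hjm : j ∈ Finset.univ.filter (fun i => u i ≠ v i) := by
      rw [huv]; exact Finset.mem_singleton_self j
    exact (Finset.mem_filter.mp hjm).2
  have hother : ∀ i, i ≠ j → u i = v i := by
    intro i hij
    by_contra hc
    have : i ∈ Finset.univ.filter (fun i => u i ≠ v i) := by simp [hc]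
    rw [huv, Finset.mem_singleton] at this
    exact hij this
  by_cases hx : x j = u j
  · have h1 : Finset.univ.filter (fun i => x i ≠ v i)
        = insert j (Finset.univ.filter (fun i => x i ≠ u i)) := by
      ext t
      simp only [Finset.mem_filter, Finset.mem_insert, Finset.mem_univ, true_and]
      by_cases ht : t = j
      · subst ht; rw [hx]; simp [hj]
      · rw [hother t ht]; simp [ht]
    have h2 : j ∉ Finset.univ.filter (fun i => x i ≠ u i) := by simp [hx]
    have h3 : ham x v = ham x u + 1 := by
      rw [ham, ham, h1, Finset.card_insert_of_notMem h2]
    simp [h3, hx]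
  · have hxv : x j = v j := by
      cases hcu : u j <;> cases hcv : v j <;> cases hcx : x j <;> simp_all
    have h1 : Finset.univ.filter (fun i => x i ≠ u i)
        = insert j (Finset.univ.filter (fun i => x i ≠ v i)) := by
      ext t
      simp only [Finset.mem_filter, Finset.mem_insert, Finset.mem_univ, true_and]
      by_cases ht : t = j
      · subst ht; rw [hxv]; simp [Ne.symm hj]
      · rw [hother t ht]; simp [ht]
    have h2 : j ∉ Finset.univ.filter (fun i => x i ≠ v i) := by simp [hxv]
    have h3 : ham x u = ham x v + 1 := by
      rw [ham, ham, h1, Finset.card_insert_of_notMem h2]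
    simp [h3, hx]

lemma face_image_symm (g : hypercube n ≃g hypercube n) (j : Fin n) (k : Bool) :
    ∃ (j' : Fin n) (k' : Bool), (face n j k).image ⇑g.symm = face n j' k' := by
  classical
  set u : Fin n → Bool := fun i => if i = j then k else false with hu
  set v : Fin n → Bool := fun i => if i = j then !k else false with hv
  have huv : Finset.univ.filter (fun i => u i ≠ v i) = {j} := by
    ext t
    simp only [Finset.mem_filter, Finset.mem_univ, true_and, Finset.mem_singleton, hu, hv]
    by_cases ht : t = j
    · subst ht; cases k <;> simp
    · simp [ht]
  have hmem : ∀ x, x ∈ face n j k ↔ ham x u < ham x v := by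
    intro x
    rw [face, Finset.mem_filter, ham_lt_iff huv x]
    simp [hu]
  set u' := g.symm u with hu'
  set v' := g.symm v with hv'
  have huv' : ham u' v' = 1 := by
    rw [hu', hv', iso_ham g.symm u v, ham, huv, Finset.card_singleton]
  obtain ⟨j', hj'⟩ := Finset.card_eq_one.mp huv'
  refine ⟨j', u' j', ?_⟩
  ext y
  have hy : y ∈ (face n j k).image ⇑g.symm ↔ g y ∈ face n j k := by
    constructor
    · intro h
      obtain ⟨z, hz, rfl⟩ := Finset.mem_image.mp h
      simpa using hz
    · intro h
      exact Finset.mem_image.mpr ⟨g y, h, by simp⟩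
  rw [hy, hmem (g y)]
  have e1 : ham (g y) u = ham y u' := by
    conv_lhs => rw [show u = g u' from (g.apply_symm_apply u).symm]
    rw [iso_ham g y u']
  have e2 : ham (g y) v = ham y v' := by
    conv_lhs => rw [show v = g v' from (g.apply_symm_apply v).symm]
    rw [iso_ham g y v']
  rw [e1, e2, ham_lt_iff hj' y]
  simp [face]

end Ham

/-! ### The binary-value equivalence -/

def binEquiv (n : ℕ) : (Fin n → Bool) ≃ Fin (2 ^ n) :=
  (Equiv.piCongrRight (fun _ => finTwoEquiv.symm)).trans
    ((Equiv.arrowCongr Fin.revPerm (Equiv.refl (Fin 2))).trans finFunctionFinEquiv)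

lemma binEquiv_val {n : ℕ} (x : Fin n → Bool) : ((binEquiv n x : Fin (2 ^ n)) : ℕ) = bval x := by
  have h1 : ((binEquiv n x : Fin (2 ^ n)) : ℕ)
      = ∑ i : Fin n, ((finTwoEquiv.symm (x (Fin.rev i)) : Fin 2) : ℕ) * 2 ^ (i : ℕ) := by
    simp [binEquiv, finFunctionFinEquiv_apply, Equiv.arrowCongr]
  rw [h1]
  have h2 : ∀ t : Fin n,
      (fun t => ((finTwoEquiv.symm (x t) : Fin 2) : ℕ) * 2 ^ ((Fin.rev t : Fin n) : ℕ))
        (Fin.revPerm t)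
      = ((finTwoEquiv.symm (x (Fin.rev t)) : Fin 2) : ℕ) * 2 ^ (t : ℕ) := by
    intro t; simp [Fin.rev_rev]
  have h3 := Equiv.sum_comp Fin.revPerm
    (fun t => ((finTwoEquiv.symm (x t) : Fin 2) : ℕ) * 2 ^ ((Fin.rev t : Fin n) : ℕ))
  calc ∑ i : Fin n, ((finTwoEquiv.symm (x (Fin.rev i)) : Fin 2) : ℕ) * 2 ^ (i : ℕ)
      = ∑ i : Fin n, (fun t => ((finTwoEquiv.symm (x t) : Fin 2) : ℕ)
          * 2 ^ ((Fin.rev t : Fin n) : ℕ)) (Fin.revPerm i) :=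
        Finset.sum_congr rfl (fun i _ => (h2 i).symm)
    _ = ∑ t : Fin n, ((finTwoEquiv.symm (x t) : Fin 2) : ℕ) * 2 ^ ((Fin.rev t : Fin n) : ℕ) := h3
    _ = bval x := by
        unfold bval
        refine Finset.sum_congr rfl (fun t _ => ?_)
        have hrev : ((Fin.rev t : Fin n) : ℕ) = n - 1 - (t : ℕ) := by
          rw [Fin.val_rev]; omega
        cases h : x t <;> simp [h, finTwoEquiv, hrev] <;> omega

lemma bval_lt {n : ℕ} (x : Fin n → Bool) : bval x < 2 ^ n := by
  rw [← binEquiv_val]; exact (binEquiv n x).isLt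

lemma bval_injective {n : ℕ} : Function.Injective (bval (n := n)) := by
  intro x y h
  have : binEquiv n x = binEquiv n y := Fin.ext (by rw [binEquiv_val, binEquiv_val, h])
  exact (binEquiv n).injective this

lemma card_initSeg {n a : ℕ} (ha : a ≤ 2 ^ n) : (initSeg n a).card = a := by
  have h1 : initSeg n a
      = Finset.univ.filter (fun x => ((binEquiv n x : Fin (2 ^ n)) : ℕ) < a) := by
    unfold initSeg
    exact Finset.filter_congr (fun x _ => by rw [binEquiv_val])
  rw [h1]
  have h2 : (Finset.univ.filter (fun x : Fin n → Bool => ((binEquiv n x : Fin (2 ^ n)) : ℕ) < a)).card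
      = (Finset.univ.filter (fun t : Fin (2 ^ n) => (t : ℕ) < a)).card := by
    refine Finset.card_equiv (binEquiv n) (fun x => ?_)
    simp
  rw [h2]
  have h3 : (Finset.univ.filter (fun t : Fin (2 ^ n) => (t : ℕ) < a)).image Fin.val
      = Finset.range a := by
    ext s
    simp only [Finset.mem_image, Finset.mem_filter, Finset.mem_univ, true_and, Finset.mem_range]
    constructor
    · rintro ⟨t, ht, rfl⟩; exact ht
    · intro hs; exact ⟨⟨s, lt_of_lt_of_le hs ha⟩, hs, rfl⟩
  calc (Finset.univ.filter (fun t : Fin (2 ^ n) => (t : ℕ) < a)).card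
      = ((Finset.univ.filter (fun t : Fin (2 ^ n) => (t : ℕ) < a)).image Fin.val).card :=
        (Finset.card_image_of_injective _ Fin.val_injective).symm
    _ = a := by rw [h3, Finset.card_range]

/-! ### Cardinality of a face -/

lemma face_card (m : ℕ) (j : Fin (m + 1)) (k : Bool) : (face (m + 1) j k).card = 2 ^ m := by
  classical
  have hsplit := Finset.card_filter_add_card_filter_not
    (s := (Finset.univ : Finset (Fin (m + 1) → Bool))) (p := fun x => x j = k)
  have huniv : (Finset.univ : Finset (Fin (m + 1) → Bool)).card = 2 ^ (m + 1) := by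
    simp [Finset.card_univ]
  have hbij : (Finset.univ.filter (fun x : Fin (m + 1) → Bool => x j = k)).card
      = (Finset.univ.filter (fun x : Fin (m + 1) → Bool => ¬ x j = k)).card := by
    refine Finset.card_bij' (fun x _ => Function.update x j (!x j))
      (fun x _ => Function.update x j (!x j)) ?_ ?_ ?_ ?_
    · intro x hx
      simp only [Finset.mem_filter, Finset.mem_univ, true_and] at hx ⊢
      rw [Function.update_self, hx]
      cases k <;> simp
    · intro x hx
      simp only [Finset.mem_filter, Finset.mem_univ, true_and] at hx ⊢
      rw [Function.update_self]
      cases hxy : x j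
      · cases k
        · rw [hxy] at hx; simp at hx
        · rfl
      · cases k
        · rfl
        · rw [hxy] at hx; simp at hx
    · intro x _
      show Function.update (Function.update x j (!x j)) j (!(Function.update x j (!x j)) j) = x
      rw [Function.update_idem, Function.update_self, Bool.not_not, Function.update_eq_self]
    · intro x _
      show Function.update (Function.update x j (!x j)) j (!(Function.update x j (!x j)) j) = x
      rw [Function.update_idem, Function.update_self, Bool.not_not, Function.update_eq_self]
  rw [huniv] at hsplit
  have hp : 2 ^ (m + 1) = 2 ^ m * 2 := pow_succ 2 m
  unfold face
  rw [hbij]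
  rw [hbij, hp] at hsplit
  have h2 : (Finset.univ.filter (fun x : Fin (m + 1) → Bool => ¬ x j = k)).card * 2
      = 2 ^ m * 2 := by rw [mul_two, hsplit]
  exact Nat.eq_of_mul_eq_mul_right (by norm_num) h2

/-! ### Sums for monotonicity -/

section Mask

variable (m : ℕ) (j' : Fin (m + 1)) (k' : Bool)

def maskFun : (Fin (m + 1) → Bool) → (Fin (m + 1) → Bool) :=
  fun x i => xor (if i = j' then k' else false) (x (j'.cycleRange i))

def maskEquiv : (Fin (m + 1) → Bool) ≃ (Fin (m + 1) → Bool) where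
  toFun := maskFun m j' k'
  invFun := fun y t =>
    xor (if (j'.cycleRange).symm t = j' then k' else false) (y ((j'.cycleRange).symm t))
  left_inv := by
    intro x; funext t
    simp only [maskFun, Equiv.apply_symm_apply]
    cases h : (if (j'.cycleRange).symm t = j' then k' else false) <;> simp
  right_inv := by
    intro y; funext t
    simp only [maskFun, Equiv.symm_apply_apply]
    cases h : (if t = j' then k' else false) <;> simp

def maskIso : hypercube (m + 1) ≃g hypercube (m + 1) where
  toEquiv := maskEquiv m j' k'
  map_rel_iff' := by
    intro x y
    show (Finset.univ.filter (fun i => maskFun m j' k' x i ≠ maskFun m j' k' y i)).card = 1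
      ↔ (Finset.univ.filter (fun i => x i ≠ y i)).card = 1
    have hxor : ∀ i, (maskFun m j' k' x i ≠ maskFun m j' k' y i)
        ↔ (x (j'.cycleRange i) ≠ y (j'.cycleRange i)) := by
      intro i; unfold maskFun
      cases (if i = j' then k' else false) <;> simp
    have hset : Finset.univ.filter (fun i => maskFun m j' k' x i ≠ maskFun m j' k' y i)
        = Finset.univ.filter (fun i => x (j'.cycleRange i) ≠ y (j'.cycleRange i)) :=
      Finset.filter_congr (fun i _ => hxor i)
    have hcard : (Finset.univ.filter (fun i => x (j'.cycleRange i) ≠ y (j'.cycleRange i))).card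
        = (Finset.univ.filter (fun i => x i ≠ y i)).card := by
      refine Finset.card_nbij' (fun i => j'.cycleRange i) (fun t => (j'.cycleRange).symm t)
        ?_ ?_ ?_ ?_
      · intro a ha; simp only [Finset.mem_coe, Finset.mem_filter, Finset.mem_univ, true_and] at ha ⊢; exact ha
      · intro a ha; simp only [Finset.mem_coe, Finset.mem_filter, Finset.mem_univ, true_and,
          Equiv.apply_symm_apply] at ha ⊢; exact ha
      · intro a _; simp
      · intro a _; simp
    rw [hset, hcard]

lemma maskIso_coe : ⇑(maskIso m j' k') = maskFun m j' k' := rfl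

def Hsum (x : Fin (m + 1) → Bool) : ℕ :=
  ∑ i ∈ Finset.univ.filter (fun i : Fin (m + 1) => 0 < i.val ∧ i.val ≤ j'.val),
    (if x i then 2 ^ (m - i.val) else 0)

def Lsum (x : Fin (m + 1) → Bool) : ℕ :=
  ∑ i ∈ Finset.univ.filter (fun i : Fin (m + 1) => j'.val < i.val),
    (if x i then 2 ^ (m - i.val) else 0)

lemma bval_eq (x : Fin (m + 1) → Bool) :
    bval x = ∑ i : Fin (m + 1), if x i then 2 ^ (m - i.val) else 0 := by
  unfold bval
  exact Finset.sum_congr rfl (fun i _ => by norm_num)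

lemma bval_decomp (x : Fin (m + 1) → Bool) (hx : x 0 = false) :
    bval x = Hsum m j' x + Lsum m j' x := by
  rw [bval_eq]
  rw [← Finset.sum_filter_add_sum_filter_not Finset.univ
    (fun i : Fin (m + 1) => j'.val < i.val) (fun i => if x i then 2 ^ (m - i.val) else 0)]
  have hB : ∑ i ∈ Finset.univ.filter (fun i : Fin (m + 1) => ¬ j'.val < i.val),
      (if x i then 2 ^ (m - i.val) else 0) = Hsum m j' x := by
    rw [← Finset.sum_filter_add_sum_filter_not
      (Finset.univ.filter (fun i : Fin (m + 1) => ¬ j'.val < i.val))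
      (fun i : Fin (m + 1) => 0 < i.val) (fun i => if x i then 2 ^ (m - i.val) else 0)]
    have h0 : ∑ i ∈ (Finset.univ.filter (fun i : Fin (m + 1) => ¬ j'.val < i.val)).filter
        (fun i : Fin (m + 1) => ¬ 0 < i.val), (if x i then 2 ^ (m - i.val) else 0) = 0 := by
      refine Finset.sum_eq_zero (fun i hi => ?_)
      simp only [Finset.mem_filter, Finset.mem_univ, true_and] at hi
      have : i = 0 := Fin.ext (by simp only [Fin.val_zero]; omega)
      rw [this, hx]; rfl
    rw [h0, add_zero]
    rw [Finset.filter_filter]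
    unfold Hsum
    refine Finset.sum_congr (Finset.filter_congr (fun i _ => ?_)) (fun _ _ => rfl)
    constructor
    · rintro ⟨h1, h2⟩; omega
    · rintro ⟨h1, h2⟩; omega
  rw [hB, Nat.add_comm]
  rfl

lemma Hsum_dvd (x : Fin (m + 1) → Bool) : 2 ^ (m - j'.val) ∣ Hsum m j' x := by
  refine Finset.dvd_sum (fun i hi => ?_)
  simp only [Finset.mem_filter, Finset.mem_univ, true_and] at hi
  cases h : x i
  · simp
  · simp only [if_pos]
    exact pow_dvd_pow 2 (by omega)

lemma sum_range_two_pow (M : ℕ) : ∑ s ∈ Finset.range M, 2 ^ s = 2 ^ M - 1 := by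
  induction M with
  | zero => simp
  | succ M ih =>
    rw [Finset.sum_range_succ, ih, pow_succ]
    have : 1 ≤ 2 ^ M := Nat.one_le_two_pow
    omega

lemma Lsum_lt (x : Fin (m + 1) → Bool) : Lsum m j' x < 2 ^ (m - j'.val) := by
  have h1 : Lsum m j' x ≤ ∑ i ∈ Finset.univ.filter (fun i : Fin (m + 1) => j'.val < i.val),
      2 ^ (m - i.val) := by
    refine Finset.sum_le_sum (fun i _ => ?_)
    split <;> simp
  have h2 : ∑ i ∈ Finset.univ.filter (fun i : Fin (m + 1) => j'.val < i.val), 2 ^ (m - i.val)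
      = ∑ s ∈ Finset.range (m - j'.val), 2 ^ s := by
    have hj : j'.val ≤ m := by have := j'.isLt; omega
    refine Finset.sum_bij' (fun (a : Fin (m + 1)) _ => m - a.val)
      (fun s _ => (⟨m - s, by omega⟩ : Fin (m + 1))) ?_ ?_ ?_ ?_ ?_
    · intro a ha
      simp only [Finset.mem_filter, Finset.mem_univ, true_and] at ha
      simp only [Finset.mem_range]
      omega
    · intro s hs
      simp only [Finset.mem_range] at hs
      simp only [Finset.mem_filter, Finset.mem_univ, true_and]
      omega
    · intro a ha
      simp only [Finset.mem_filter, Finset.mem_univ, true_and] at ha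
      apply Fin.ext
      simp only []
      omega
    · intro s hs
      simp only [Finset.mem_range] at hs
      simp only []
      omega
    · intro a _; rfl
  have h3 := sum_range_two_pow (m - j'.val)
  have h4 : 1 ≤ 2 ^ (m - j'.val) := Nat.one_le_two_pow
  omega

lemma bval_mask (x : Fin (m + 1) → Bool) (hx : x 0 = false) :
    bval (maskFun m j' k' x)
      = (if k' then 2 ^ (m - j'.val) else 0) + (2 * Hsum m j' x + Lsum m j' x) := by
  rw [bval_eq]
  rw [← Finset.sum_erase_add Finset.univ _ (Finset.mem_univ j')]
  have hterm : (if maskFun m j' k' x j' then 2 ^ (m - j'.val) else 0)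
      = (if k' then 2 ^ (m - j'.val) else 0) := by
    unfold maskFun
    rw [if_pos rfl, Fin.cycleRange_self, hx]
    cases k' <;> rfl
  have hsplit : Finset.univ.erase j'
      = (Finset.univ.filter (fun i : Fin (m + 1) => i.val < j'.val))
        ∪ (Finset.univ.filter (fun i : Fin (m + 1) => j'.val < i.val)) := by
    ext t
    simp only [Finset.mem_erase, Finset.mem_union, Finset.mem_filter, Finset.mem_univ, true_and,
      and_true, Ne, Fin.ext_iff]
    omega
  have hdisj : Disjoint (Finset.univ.filter (fun i : Fin (m + 1) => i.val < j'.val))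
      (Finset.univ.filter (fun i : Fin (m + 1) => j'.val < i.val)) := by
    rw [Finset.disjoint_left]
    intro t h1 h2
    simp only [Finset.mem_filter, Finset.mem_univ, true_and] at h1 h2
    omega
  rw [hsplit, Finset.sum_union hdisj, hterm]
  have hgt : ∑ i ∈ Finset.univ.filter (fun i : Fin (m + 1) => j'.val < i.val),
      (if maskFun m j' k' x i then 2 ^ (m - i.val) else 0) = Lsum m j' x := by
    refine Finset.sum_congr rfl (fun i hi => ?_)
    simp only [Finset.mem_filter, Finset.mem_univ, true_and] at hi
    have hlt : j' < i := by rw [Fin.lt_def]; exact hi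
    have hne : i ≠ j' := by intro h; rw [h] at hi; omega
    unfold maskFun
    rw [if_neg hne, Fin.cycleRange_of_gt hlt]
    cases x i <;> rfl
  have hlt : ∑ i ∈ Finset.univ.filter (fun i : Fin (m + 1) => i.val < j'.val),
      (if maskFun m j' k' x i then 2 ^ (m - i.val) else 0) = 2 * Hsum m j' x := by
    unfold Hsum
    rw [Finset.mul_sum]
    have hj : j'.val ≤ m := by have := j'.isLt; omega
    refine Finset.sum_bij' (fun (a : Fin (m + 1)) (ha : a ∈ _) => (⟨a.val + 1, by
        simp only [Finset.mem_filter, Finset.mem_univ, true_and] at ha; omega⟩ : Fin (m + 1)))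
      (fun (t : Fin (m + 1)) (_ : t ∈ _) => (⟨t.val - 1, by have := t.isLt; omega⟩ : Fin (m + 1)))
      ?_ ?_ ?_ ?_ ?_
    · intro a ha
      simp only [Finset.mem_filter, Finset.mem_univ, true_and] at ha ⊢
      omega
    · intro t ht
      simp only [Finset.mem_filter, Finset.mem_univ, true_and] at ht ⊢
      omega
    · intro a ha
      apply Fin.ext
      simp only []
      omega
    · intro t ht
      simp only [Finset.mem_filter, Finset.mem_univ, true_and] at ht
      apply Fin.ext
      simp only []
      omega
    · intro a ha
      simp only [Finset.mem_filter, Finset.mem_univ, true_and] at ha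
      have hlta : (a : Fin (m + 1)) < j' := by rw [Fin.lt_def]; exact ha
      have hne : a ≠ j' := by intro h; rw [h] at ha; omega
      have hcyc : j'.cycleRange a = ⟨a.val + 1, by omega⟩ := by
        apply Fin.ext
        rw [Fin.coe_cycleRange_of_lt hlta]
      unfold maskFun
      rw [if_neg hne, hcyc]
      have hexp : m - a.val = (m - (a.val + 1)) + 1 := by omega
      cases h : x ⟨a.val + 1, by omega⟩
      · simp [h]
      · simp [h, hexp, pow_succ, Nat.mul_comm]
  rw [hgt, hlt]
  exact Nat.add_comm _ _

lemma bval_mask_mono {x y : Fin (m + 1) → Bool} (hx : x 0 = false) (hy : y 0 = false)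
    (hlt : bval x < bval y) : bval (maskFun m j' k' x) < bval (maskFun m j' k' y) := by
  rw [bval_mask m j' k' x hx, bval_mask m j' k' y hy]
  rw [bval_decomp m j' x hx, bval_decomp m j' y hy] at hlt
  set w := 2 ^ (m - j'.val) with hw
  have hw0 : 0 < w := by rw [hw]; positivity
  have h1 := Hsum_dvd m j' x
  have h2 := Hsum_dvd m j' y
  have h3 := Lsum_lt m j' x
  have h4 := Lsum_lt m j' y
  set Hx := Hsum m j' x
  set Hy := Hsum m j' y
  set Lx := Lsum m j' x
  set Ly := Lsum m j' y
  set c := (if k' then w else 0) with hc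
  rcases lt_trichotomy Hx Hy with h | h | h
  · have hle : Hx + w ≤ Hy := by
      have hd := Nat.dvd_sub h2 h1
      have := Nat.le_of_dvd (by omega) hd
      omega
    omega
  · omega
  · have hle : Hy + w ≤ Hx := by
      have hd := Nat.dvd_sub h1 h2
      have := Nat.le_of_dvd (by omega) hd
      omega
    omega

end Mask

/-! ### Down-sets -/

lemma mem_F00 {m : ℕ} {x : Fin (m + 1) → Bool} (h : bval x < 2 ^ m) : x 0 = false := by
  by_contra hc
  have hx : x 0 = true := by cases h' : x 0 <;> simp_all
  have hle := Finset.single_le_sum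
    (f := fun i : Fin (m + 1) => if x i then 2 ^ (m - i.val) else 0)
    (fun i _ => Nat.zero_le _) (Finset.mem_univ (0 : Fin (m + 1)))
  rw [← bval_eq] at hle
  simp only [hx, if_pos, Fin.val_zero, Nat.sub_zero] at hle
  omega

lemma downset_eq {n : ℕ} {S T U : Finset (Fin n → Bool)} (hSU : S ⊆ U) (hTU : T ⊆ U)
    (hS : ∀ y ∈ S, ∀ x ∈ U, bval x ≤ bval y → x ∈ S)
    (hT : ∀ y ∈ T, ∀ x ∈ U, bval x ≤ bval y → x ∈ T)
    (hc : S.card = T.card) : S = T := by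
  have hsub : S ⊆ T ∨ T ⊆ S := by
    by_cases h : S ⊆ T
    · exact Or.inl h
    · right
      obtain ⟨s, hs, hsT⟩ := Finset.not_subset.mp h
      intro t ht
      rcases le_total (bval t) (bval s) with hle | hle
      · exact hS s hs t (hTU ht) hle
      · exact absurd (hT t ht s (hSU hs) hle) hsT
  rcases hsub with h | h
  · exact Finset.eq_of_subset_of_card_le h (le_of_eq hc.symm)
  · exact (Finset.eq_of_subset_of_card_le h (le_of_eq hc)).symm

theorem stmt_16 (n a : ℕ) (hn : 0 < n) (ha : a ≤ 2 ^ n) (j : Fin n) (k : Bool)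
    (g : hypercube n ≃g hypercube n) :
    ∃ h : hypercube n ≃g hypercube n,
      (face n ⟨0, hn⟩ false).image h = (face n j k).image g.symm ∧
      (initSeg n (((initSeg n a).image g ∩ face n j k).card)).image h =
        initSeg n a ∩ (face n j k).image g.symm := by
  classical
  obtain ⟨m, rfl⟩ : ∃ m, n = m + 1 := ⟨n - 1, by omega⟩
  obtain ⟨j', k', hface⟩ := face_image_symm g j k
  rw [hface]
  have h00 : (⟨0, hn⟩ : Fin (m + 1)) = 0 := by
    apply Fin.ext; simp
  rw [h00]
  -- rewrite the cardinality
  have himg : (initSeg (m + 1) a).image ⇑g ∩ face (m + 1) j k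
      = ((initSeg (m + 1) a) ∩ (face (m + 1) j k).image ⇑g.symm).image ⇑g := by
    ext y
    simp only [Finset.mem_inter, Finset.mem_image]
    constructor
    · rintro ⟨⟨x, hx, rfl⟩, hyf⟩
      exact ⟨x, ⟨hx, ⟨g x, hyf, by simp⟩⟩, rfl⟩
    · rintro ⟨x, ⟨hx, z, hz, hzx⟩, rfl⟩
      refine ⟨⟨x, hx, rfl⟩, ?_⟩
      rw [← hzx]
      simpa using hz
  have hginj : Function.Injective ⇑g := g.toEquiv.injective
  have hcard : ((initSeg (m + 1) a).image ⇑g ∩ face (m + 1) j k).card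
      = (initSeg (m + 1) a ∩ face (m + 1) j' k').card := by
    rw [himg, Finset.card_image_of_injective _ hginj, hface]
  rw [hcard]
  set a' := (initSeg (m + 1) a ∩ face (m + 1) j' k').card with ha'def
  have ha'le : a' ≤ 2 ^ m := by
    rw [ha'def]
    calc (initSeg (m + 1) a ∩ face (m + 1) j' k').card
        ≤ (face (m + 1) j' k').card := Finset.card_le_card Finset.inter_subset_right
      _ = 2 ^ m := face_card m j' k'
  -- the automorphism h
  refine ⟨maskIso m j' k', ?_, ?_⟩
  · -- face image
    ext y
    rw [maskIso_coe]
    constructor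
    · intro hy
      obtain ⟨x, hx, rfl⟩ := Finset.mem_image.mp hy
      simp only [face, Finset.mem_filter, Finset.mem_univ, true_and] at hx ⊢
      unfold maskFun
      rw [if_pos rfl, Fin.cycleRange_self, hx]
      cases k' <;> rfl
    · intro hy
      simp only [face, Finset.mem_filter, Finset.mem_univ, true_and] at hy
      refine Finset.mem_image.mpr ⟨(maskEquiv m j' k').symm y, ?_, ?_⟩
      · simp only [face, Finset.mem_filter, Finset.mem_univ, true_and]
        show xor (if (j'.cycleRange).symm 0 = j' then k' else false)
          (y ((j'.cycleRange).symm 0)) = false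
        have hsymm0 : (j'.cycleRange).symm (0 : Fin (m + 1)) = j' := by
          rw [Equiv.symm_apply_eq]
          exact (Fin.cycleRange_self j').symm
        rw [hsymm0, if_pos rfl, hy]
        cases k' <;> rfl
      · exact (maskEquiv m j' k').apply_symm_apply y
  · -- initial segment image
    have hsymm0 : (j'.cycleRange).symm (0 : Fin (m + 1)) = j' := by
      rw [Equiv.symm_apply_eq]
      exact (Fin.cycleRange_self j').symm
    refine downset_eq (U := face (m + 1) j' k') ?_ Finset.inter_subset_right ?_ ?_ ?_
    · -- image ⊆ face
      intro y hy
      rw [maskIso_coe] at hy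
      obtain ⟨x, hx, rfl⟩ := Finset.mem_image.mp hy
      simp only [initSeg, Finset.mem_filter, Finset.mem_univ, true_and] at hx
      have hx0 : x 0 = false := mem_F00 (lt_of_lt_of_le hx ha'le)
      simp only [face, Finset.mem_filter, Finset.mem_univ, true_and]
      unfold maskFun
      rw [if_pos rfl, Fin.cycleRange_self, hx0]
      cases k' <;> rfl
    · -- down-closed image
      intro y hy x hxU hle
      rw [maskIso_coe] at hy ⊢
      obtain ⟨z, hz, rfl⟩ := Finset.mem_image.mp hy
      simp only [initSeg, Finset.mem_filter, Finset.mem_univ, true_and] at hz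
      have hz0 : z 0 = false := mem_F00 (lt_of_lt_of_le hz ha'le)
      simp only [face, Finset.mem_filter, Finset.mem_univ, true_and] at hxU
      set z' := (maskEquiv m j' k').symm x with hz'def
      have hz'0 : z' 0 = false := by
        show xor (if (j'.cycleRange).symm 0 = j' then k' else false)
          (x ((j'.cycleRange).symm 0)) = false
        rw [hsymm0, if_pos rfl, hxU]
        cases k' <;> rfl
      have hxz' : maskFun m j' k' z' = x := (maskEquiv m j' k').apply_symm_apply x
      have hblt : bval z' < a' := by
        by_contra hcon
        push_neg at hcon
        rcases lt_or_eq_of_le (lt_of_lt_of_le hz hcon).le with h | h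
        · have := bval_mask_mono m j' k' hz0 hz'0 (lt_of_lt_of_le hz hcon)
          rw [hxz'] at this
          omega
        · exact absurd h (by omega)
      refine Finset.mem_image.mpr ⟨z', ?_, hxz'⟩
      simp only [initSeg, Finset.mem_filter, Finset.mem_univ, true_and]
      exact hblt
    · -- down-closed intersection
      intro y hy x hxU hle
      simp only [Finset.mem_inter, initSeg, Finset.mem_filter, Finset.mem_univ, true_and]
        at hy ⊢
      exact ⟨lt_of_le_of_lt hle hy.1, hxU⟩
    · -- cards
      rw [maskIso_coe]
      rw [Finset.card_image_of_injective _
        (show Function.Injective (maskFun m j' k') from (maskEquiv m j' k').injective)]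
      rw [card_initSeg (le_trans ha'le (Nat.pow_le_pow_right (by norm_num) (by omega)))]
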